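/- arXiv:2205.07638 — 8 statements merged into one kernel-verified Lean document; each statement's English description precedes it below -/
import Mathlib

section
/- Let d ≥ 1 and k ≥ 1 be integers with k·(1 − 1/d)^{k−1} < 1. Then every (k,d)-layered digraph contains a rainbow cycle. (Consequently the rainbow cycle number satisfies R(d) < k.) -/
/-- If `k (1 - 1/d)^(k-1) < 1`, then every `(k,d)`-layered digraph contains a
rainbow cycle: a directed cycle (given by a start vertex `v` and a nonempty list
`c` of further vertices, with consecutive edges and an edge back to `v`) that
contains at most one vertex from each part. Consequently `R(d) < k`. -/
theorem rainbow_cycle_of_layered_digraph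
    {V : Type*} [Fintype V] [DecidableEq V] {k d : ℕ}
    (hd : 1 ≤ d) (hk : 1 ≤ k)
    (hkd : (k : ℝ) * (1 - 1 / (d : ℝ)) ^ (k - 1) < 1)
    (A : V → V → Prop) (part : V → Fin k)
    (hne : ∀ i : Fin k, ∃ x : V, part x = i)
    (hsize : ∀ i : Fin k, (Finset.univ.filter fun x : V => part x = i).card ≤ d)
    (hin : ∀ x : V, ∀ j : Fin k, j ≠ part x → ∃ u : V, part u = j ∧ A u x)
    (hout : ∀ x : V, ∀ j : Fin k, j ≠ part x → ∃ u : V, part u = j ∧ A x u) :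
    ∃ (v : V) (c : List V), c ≠ [] ∧ List.Chain A v (c ++ [v]) ∧
      ((v :: c).map part).Nodup := by
  classical
  set S : Fin k → Finset V := fun i => Finset.univ.filter fun x => part x = i with hS
  have hmemS : ∀ (x : V) (i : Fin k), x ∈ S i ↔ part x = i := by
    intro x i; simp [hS]
  have hn1 : ∀ i, 1 ≤ (S i).card := by
    intro i
    obtain ⟨x, hx⟩ := hne i
    exact Finset.card_pos.mpr ⟨x, (hmemS x i).mpr hx⟩
  have hnd : ∀ i, (S i).card ≤ d := hsize
  -- Step 1: there is a choice of one vertex per part such that each chosen vertex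
  -- has an out-neighbor among the other chosen vertices.
  obtain ⟨w, hw, hgood⟩ :
      ∃ w ∈ Fintype.piFinset S, ∀ i : Fin k, ∃ j, j ≠ i ∧ A (w i) (w j) := by
    by_contra hcon
    push_neg at hcon
    -- every tuple lies in some "bad" set
    have hsub0 : Fintype.piFinset S ⊆
        Finset.univ.biUnion (fun i : Fin k =>
          (Fintype.piFinset S).filter fun w => ∀ j, j ≠ i → ¬ A (w i) (w j)) := by
      intro w hw
      obtain ⟨i, hi⟩ := hcon w hw
      exact Finset.mem_biUnion.mpr ⟨i, Finset.mem_univ i,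
        Finset.mem_filter.mpr ⟨hw, hi⟩⟩
    have key : ∀ i : Fin k,
        ((Fintype.piFinset S).filter fun w => ∀ j, j ≠ i → ¬ A (w i) (w j)).card
          ≤ (S i).card * ∏ j ∈ Finset.univ.erase i, ((S j).card - 1) := by
      intro i
      have hsub : ((Fintype.piFinset S).filter fun w => ∀ j, j ≠ i → ¬ A (w i) (w j))
          ⊆ (S i).biUnion fun x => Fintype.piFinset fun j =>
              if j = i then {x} else (S j).filter fun y => ¬ A x y := by
        intro w hw
        rw [Finset.mem_filter] at hw
        obtain ⟨hw1, hw2⟩ := hw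
        rw [Fintype.mem_piFinset] at hw1
        refine Finset.mem_biUnion.mpr ⟨w i, hw1 i, ?_⟩
        rw [Fintype.mem_piFinset]
        intro j
        by_cases hj : j = i
        · subst hj; simp
        · simp only [if_neg hj, Finset.mem_filter]
          exact ⟨hw1 j, hw2 j hj⟩
      refine le_trans (Finset.card_le_card hsub) (le_trans Finset.card_biUnion_le ?_)
      have hx : ∀ x ∈ S i,
          (Fintype.piFinset fun j =>
              if j = i then ({x} : Finset V) else (S j).filter fun y => ¬ A x y).card
            ≤ ∏ j ∈ Finset.univ.erase i, ((S j).card - 1) := by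
        intro x hxS
        have hxi : part x = i := (hmemS x i).mp hxS
        rw [Fintype.card_piFinset]
        rw [← Finset.mul_prod_erase Finset.univ
          (fun j => (if j = i then ({x} : Finset V) else (S j).filter fun y => ¬ A x y).card)
          (Finset.mem_univ i)]
        simp only [eq_self_iff_true, if_true, Finset.card_singleton, one_mul]
        refine Finset.prod_le_prod' fun j hj => ?_
        have hji : j ≠ i := (Finset.mem_erase.mp hj).1
        rw [if_neg hji]
        obtain ⟨u, hu, hAu⟩ := hout x j (by rw [hxi]; exact hji)
        have husj : u ∈ S j := (hmemS u j).mpr hu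
        have hsub2 : (S j).filter (fun y => ¬ A x y) ⊆ (S j).erase u := by
          intro y hy
          rw [Finset.mem_filter] at hy
          refine Finset.mem_erase.mpr ⟨?_, hy.1⟩
          rintro rfl
          exact hy.2 hAu
        calc ((S j).filter (fun y => ¬ A x y)).card ≤ ((S j).erase u).card :=
              Finset.card_le_card hsub2
          _ = (S j).card - 1 := Finset.card_erase_of_mem husj
      calc ∑ x ∈ S i, (Fintype.piFinset fun j =>
              if j = i then ({x} : Finset V) else (S j).filter fun y => ¬ A x y).card
          ≤ ∑ _x ∈ S i, ∏ j ∈ Finset.univ.erase i, ((S j).card - 1) :=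
            Finset.sum_le_sum hx
        _ = (S i).card * ∏ j ∈ Finset.univ.erase i, ((S j).card - 1) := by
            rw [Finset.sum_const, smul_eq_mul]
    have htot : (Fintype.piFinset S).card
        ≤ ∑ i : Fin k, (S i).card * ∏ j ∈ Finset.univ.erase i, ((S j).card - 1) :=
      le_trans (Finset.card_le_card hsub0)
        (le_trans Finset.card_biUnion_le (Finset.sum_le_sum fun i _ => key i))
    -- now derive a contradiction with the numeric hypothesis
    have hdpos : (0 : ℝ) < (d : ℝ) := by exact_mod_cast Nat.lt_of_lt_of_le Nat.zero_lt_one hd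
    have hfrac0 : (0 : ℝ) ≤ 1 - 1 / (d : ℝ) := by
      rw [sub_nonneg, div_le_one hdpos]
      exact_mod_cast hd
    have perj : ∀ j : Fin k, ((S j).card : ℝ) - 1 ≤ (1 - 1 / (d : ℝ)) * ((S j).card : ℝ) := by
      intro j
      have h1 : ((S j).card : ℝ) ≤ (d : ℝ) := by exact_mod_cast hnd j
      have h2 : ((S j).card : ℝ) / (d : ℝ) ≤ 1 := by rw [div_le_one hdpos]; exact h1
      have h3 : (1 - 1 / (d : ℝ)) * ((S j).card : ℝ)
          = ((S j).card : ℝ) - ((S j).card : ℝ) / (d : ℝ) := by ring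
      linarith
    have hprodpos : (0 : ℝ) < ∏ i : Fin k, ((S i).card : ℝ) := by
      refine Finset.prod_pos fun i _ => ?_
      exact_mod_cast Nat.lt_of_lt_of_le Nat.zero_lt_one (hn1 i)
    have hcast : ((Fintype.piFinset S).card : ℝ) = ∏ i : Fin k, ((S i).card : ℝ) := by
      rw [Fintype.card_piFinset]; push_cast; rfl
    have h1 : ((Fintype.piFinset S).card : ℝ)
        ≤ ∑ i : Fin k, ((S i).card : ℝ) * ∏ j ∈ Finset.univ.erase i, (((S j).card : ℝ) - 1) := by
      calc ((Fintype.piFinset S).card : ℝ)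
          ≤ ((∑ i : Fin k, (S i).card * ∏ j ∈ Finset.univ.erase i, ((S j).card - 1) : ℕ) : ℝ) :=
            Nat.cast_le.mpr htot
        _ = ∑ i : Fin k, ((S i).card : ℝ) * ∏ j ∈ Finset.univ.erase i, (((S j).card : ℝ) - 1) := by
            rw [Nat.cast_sum]
            refine Finset.sum_congr rfl fun i _ => ?_
            rw [Nat.cast_mul, Nat.cast_prod]
            congr 1
            exact Finset.prod_congr rfl fun j _ => by
              rw [Nat.cast_sub (hn1 j), Nat.cast_one]
    have h2 : ∑ i : Fin k, ((S i).card : ℝ) * ∏ j ∈ Finset.univ.erase i, (((S j).card : ℝ) - 1)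
        ≤ (k : ℝ) * ((1 - 1 / (d : ℝ)) ^ (k - 1) * ∏ i : Fin k, ((S i).card : ℝ)) := by
      calc ∑ i : Fin k, ((S i).card : ℝ) * ∏ j ∈ Finset.univ.erase i, (((S j).card : ℝ) - 1)
          ≤ ∑ _i : Fin k, (1 - 1 / (d : ℝ)) ^ (k - 1) * ∏ i : Fin k, ((S i).card : ℝ) := by
            refine Finset.sum_le_sum fun i _ => ?_
            have hstep : ∏ j ∈ Finset.univ.erase i, (((S j).card : ℝ) - 1)
                ≤ ∏ j ∈ Finset.univ.erase i, ((1 - 1 / (d : ℝ)) * ((S j).card : ℝ)) := by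
              refine Finset.prod_le_prod (fun j _ => ?_) (fun j _ => perj j)
              have := hn1 j
              have : (1 : ℝ) ≤ ((S j).card : ℝ) := by exact_mod_cast this
              linarith
            have hrw : ∏ j ∈ Finset.univ.erase i, ((1 - 1 / (d : ℝ)) * ((S j).card : ℝ))
                = (1 - 1 / (d : ℝ)) ^ (k - 1) * ∏ j ∈ Finset.univ.erase i, ((S j).card : ℝ) := by
              rw [Finset.prod_mul_distrib, Finset.prod_const,
                Finset.card_erase_of_mem (Finset.mem_univ i), Finset.card_univ,
                Fintype.card_fin]
            have hmer := Finset.mul_prod_erase Finset.univ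
              (fun j : Fin k => ((S j).card : ℝ)) (Finset.mem_univ i)
            calc ((S i).card : ℝ) * ∏ j ∈ Finset.univ.erase i, (((S j).card : ℝ) - 1)
                ≤ ((S i).card : ℝ) * ∏ j ∈ Finset.univ.erase i,
                    ((1 - 1 / (d : ℝ)) * ((S j).card : ℝ)) := by
                  refine mul_le_mul_of_nonneg_left hstep ?_
                  exact Nat.cast_nonneg _
              _ = (1 - 1 / (d : ℝ)) ^ (k - 1) * ∏ i : Fin k, ((S i).card : ℝ) := by
                  rw [hrw, ← hmer]; ring
        _ = (k : ℝ) * ((1 - 1 / (d : ℝ)) ^ (k - 1) * ∏ i : Fin k, ((S i).card : ℝ)) := by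
            rw [Finset.sum_const, Finset.card_univ, Fintype.card_fin, nsmul_eq_mul]
    have hlt : (k : ℝ) * ((1 - 1 / (d : ℝ)) ^ (k - 1) * ∏ i : Fin k, ((S i).card : ℝ))
        < ∏ i : Fin k, ((S i).card : ℝ) := by
      nlinarith [hkd, hprodpos]
    rw [hcast] at h1
    linarith
  -- Step 2: extract the rainbow cycle
  rw [Fintype.mem_piFinset] at hw
  have hpart : ∀ i, part (w i) = i := fun i => (hmemS (w i) i).mp (hw i)
  choose g hg1 hg2 using hgood
  have hk0 : 0 < k := hk
  set x₀ : Fin k := ⟨0, hk0⟩ with hx₀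
  set F : ℕ → Fin k := fun n => g^[n] x₀ with hF
  have hFsucc : ∀ n, F (n + 1) = g (F n) := by
    intro n; rw [hF]; simp [Function.iterate_succ_apply']
  have edge : ∀ n, A (w (F n)) (w (F (n + 1))) := by
    intro n; rw [hFsucc]; exact hg2 (F n)
  have hFne : ∀ n, F (n + 1) ≠ F n := by
    intro n; rw [hFsucc]; exact hg1 (F n)
  obtain ⟨a₀, b₀, hab₀, heq₀⟩ := Finite.exists_ne_map_eq_of_infinite F
  have hP : ∃ b, ∃ a, a < b ∧ F a = F b := by
    rcases lt_or_gt_of_ne hab₀ with h | h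
    · exact ⟨b₀, a₀, h, heq₀⟩
    · exact ⟨a₀, b₀, h, heq₀.symm⟩
  set b := Nat.find hP with hb
  obtain ⟨a, hab, hFab⟩ := Nat.find_spec hP
  rw [← hb] at hab hFab
  have hmin : ∀ m, m < b → ¬ ∃ a', a' < m ∧ F a' = F m := fun m hm => Nat.find_min hP hm
  have distinct : ∀ s t, s < t → t < b → F s ≠ F t := by
    intro s t hst htb heq
    exact hmin t htb ⟨s, hst, heq⟩
  have hb2 : a + 2 ≤ b := by
    rcases Nat.lt_or_ge (a + 1) b with h | h
    · omega
    · exfalso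
      have hba : b = a + 1 := by omega
      rw [hba] at hFab
      exact hFne a hFab.symm
  set m := b - a with hm
  have hm2 : 2 ≤ m := by omega
  refine ⟨w (F a), (List.range (m - 1)).map fun t => w (F (a + 1 + t)), ?_, ?_, ?_⟩
  · simp only [ne_eq, List.map_eq_nil_iff, List.range_eq_nil]
    omega
  · -- chain
    have chainAux : ∀ (t s : ℕ),
        List.Chain A (w (F s)) ((List.range t).map fun r => w (F (s + 1 + r))) := by
      intro t
      induction t with
      | zero => intro s; simp; exact List.Chain.nil
      | succ t ih =>
        intro s
        rw [List.range_succ_eq_map, List.map_cons, List.map_map]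
        refine List.Chain.cons (edge s) ?_
        have heq : (List.range t).map ((fun r => w (F (s + 1 + r))) ∘ Nat.succ)
            = (List.range t).map (fun r => w (F (s + 1 + 1 + r))) := by
          refine List.map_congr_left fun r _ => ?_
          simp only [Function.comp_apply]
          congr 2
          omega
        rw [heq]
        exact ih (s + 1)
    have hlist : ((List.range (m - 1)).map fun t => w (F (a + 1 + t))) ++ [w (F a)]
        = (List.range m).map fun t => w (F (a + 1 + t)) := by
      have hr : List.range m = List.range (m - 1) ++ [m - 1] := by
        conv_lhs => rw [show m = (m - 1) + 1 by omega]
        rw [List.range_succ]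
      rw [hr, List.map_append, List.map_singleton]
      have hab' : a + 1 + (m - 1) = b := by omega
      rw [hab', ← hFab]
    rw [hlist]
    exact chainAux m a
  · -- nodup
    have hlist2 : (w (F a) :: (List.range (m - 1)).map fun t => w (F (a + 1 + t)))
        = (List.range m).map fun t => w (F (a + t)) := by
      have hr : List.range m = 0 :: (List.range (m - 1)).map Nat.succ := by
        conv_lhs => rw [show m = (m - 1) + 1 by omega]
        rw [List.range_succ_eq_map]
      rw [hr, List.map_cons, List.map_map]
      congr 1
      refine List.map_congr_left fun r _ => ?_
      simp only [Function.comp_apply, Nat.succ_eq_add_one]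
      congr 2
      omega
    rw [hlist2, List.map_map]
    have : (part ∘ fun t => w (F (a + t))) = fun t => F (a + t) := by
      funext t; simp [hpart]
    rw [this]
    refine List.Nodup.map_on ?_ List.nodup_range
    intro s hs t ht heq
    rw [List.mem_range] at hs ht
    by_contra hne'
    rcases lt_or_gt_of_ne hne' with h | h
    · exact distinct (a + s) (a + t) (by omega) (by omega) heq
    · exact distinct (a + t) (a + s) (by omega) (by omega) heq.symm
end

section
/- For every integer d ≥ 2 and every integer k with k ≥ 4·d·ln d, every (k,d)-layered digraph contains a rainbow cycle; in particular the rainbow cycle number satisfies R(d) < 4·d·ln d, so R(d) = O(d log d). -/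
lemma analytic_bound {d k : ℕ} (hd : 2 ≤ d) (hk : 4 * (d : ℝ) * Real.log d ≤ (k : ℝ)) :
    (k : ℝ) * (((d : ℝ) - 1) / d) ^ (k - 1) < 1 := by
  have hd0 : (0 : ℝ) < d := by positivity
  have hd2 : (2 : ℝ) ≤ d := by exact_mod_cast hd
  have hlogd : 0 < Real.log d := Real.log_pos (by linarith)
  have hk0 : (0 : ℝ) < k := lt_of_lt_of_le (by positivity) hk
  have hk1 : 1 ≤ k := by exact_mod_cast Nat.one_le_iff_ne_zero.mpr (by
    rintro rfl; simp at hk0)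
  -- log k ≤ k/d^2 + 2 log d - 1
  have h1 : Real.log ((k : ℝ) / (d^2)) ≤ (k : ℝ) / d^2 - 1 :=
    Real.log_le_sub_one_of_pos (by positivity)
  have h2 : Real.log ((k : ℝ) / (d^2)) = Real.log k - 2 * Real.log d := by
    rw [Real.log_div (by positivity) (by positivity), Real.log_pow]
    push_cast; ring
  have h3 : Real.log k ≤ (k : ℝ) / d^2 + 2 * Real.log d - 1 := by
    rw [h2] at h1; linarith
  -- d log k ≤ k - d
  have h4 : (d : ℝ) * Real.log k ≤ (k : ℝ) / d + 2 * d * Real.log d - d := by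
    have := mul_le_mul_of_nonneg_left h3 (le_of_lt hd0)
    calc (d:ℝ) * Real.log k ≤ (d:ℝ) * ((k : ℝ) / d^2 + 2 * Real.log d - 1) := this
      _ = (k : ℝ) / d + 2 * d * Real.log d - d := by field_simp
  have h5 : (k : ℝ) / d ≤ (k : ℝ) / 2 := by
    apply div_le_div_of_nonneg_left (le_of_lt hk0) (by norm_num) hd2
  have h6 : 2 * (d : ℝ) * Real.log d ≤ (k : ℝ) / 2 := by linarith
  have h7 : (d : ℝ) * Real.log k < (k : ℝ) - 1 := by linarith
  -- hence log k < (k-1)/d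
  have h8 : Real.log k < ((k : ℝ) - 1) / d := by
    rw [lt_div_iff₀ hd0]; linarith [mul_comm (Real.log (k:ℝ)) (d:ℝ)]
  -- base bound
  have hb0 : (0 : ℝ) ≤ ((d : ℝ) - 1) / d := div_nonneg (by linarith) (le_of_lt hd0)
  have hb1 : ((d : ℝ) - 1) / d ≤ Real.exp (-(1 / d)) := by
    have := Real.add_one_le_exp (-(1/(d:ℝ)))
    have he : ((d : ℝ) - 1) / d = -(1/(d:ℝ)) + 1 := by field_simp; ring
    linarith [he ▸ this]
  have hcast : ((k - 1 : ℕ) : ℝ) = (k : ℝ) - 1 := by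
    push_cast [Nat.cast_sub hk1]; ring
  have hpow : (((d : ℝ) - 1) / d) ^ (k - 1) ≤ Real.exp (-(((k:ℝ) - 1) / d)) := by
    calc (((d : ℝ) - 1) / d) ^ (k - 1) ≤ Real.exp (-(1/(d:ℝ))) ^ (k-1) :=
          pow_le_pow_left₀ hb0 hb1 _
      _ = Real.exp (((k-1 : ℕ) : ℝ) * (-(1/(d:ℝ)))) := (Real.exp_nat_mul _ _).symm
      _ = Real.exp (-(((k:ℝ) - 1) / d)) := by rw [hcast]; ring_nf
  have hexp : Real.exp (-(((k:ℝ) - 1) / d)) < Real.exp (-(Real.log k)) := by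
    apply Real.exp_lt_exp.mpr
    rw [neg_lt_neg_iff]
    exact h8
  have hfin : Real.exp (-(Real.log k)) = ((k : ℝ))⁻¹ := by
    rw [Real.exp_neg, Real.exp_log hk0]
  calc (k : ℝ) * (((d : ℝ) - 1) / d) ^ (k - 1)
      ≤ (k : ℝ) * Real.exp (-(((k:ℝ) - 1) / d)) := by
        exact mul_le_mul_of_nonneg_left hpow (le_of_lt hk0)
    _ < (k : ℝ) * ((k:ℝ))⁻¹ := by
        rw [← hfin]; exact mul_lt_mul_of_pos_left hexp hk0
    _ = 1 := mul_inv_cancel₀ (ne_of_gt hk0)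

lemma chain_range'_helper (R : ℕ → ℕ → Prop) (hR : ∀ n, R n (n + 1)) :
    ∀ (m a c : ℕ), R (a + m) c → List.Chain R a (List.range' (a + 1) m ++ [c]) := by
  intro m
  induction m with
  | zero =>
      intro a c hc
      simpa using List.Chain.cons (by simpa using hc) List.Chain.nil
  | succ m ih =>
      intro a c hc
      rw [List.range'_succ]
      refine List.Chain.cons (hR a) ?_
      have : a + 1 + m = a + (m + 1) := by omega
      exact ih (a + 1) c (this ▸ hc)

lemma exists_rainbow_of_no_sink {V : Type*} {k : ℕ} (hk : 0 < k)
    (A : V → V → Prop) (part : V → Fin k) (f : Fin k → V)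
    (hf : ∀ i, part (f i) = i)
    (h : ∀ i, ∃ j, j ≠ i ∧ A (f i) (f j)) :
    ∃ (v : V) (c : List V), c ≠ [] ∧ List.Chain A v (c ++ [v]) ∧
      ((v :: c).map part).Nodup := by
  classical
  choose g hg hA using h
  set x : Fin k := ⟨0, hk⟩
  set F : ℕ → Fin k := fun n => g^[n] x with hF
  have hFsucc : ∀ n, F (n + 1) = g (F n) := fun n => Function.iterate_succ_apply' g n x
  -- pigeonhole
  have hP : ∃ n, ∃ m < n, F m = F n := by
    obtain ⟨p, q, hpq, heq⟩ := Fintype.exists_ne_map_eq_of_card_lt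
      (fun n : Fin (k + 1) => F n) (by simp)
    rcases lt_or_gt_of_ne hpq with hlt | hlt
    · exact ⟨q, p, hlt, heq⟩
    · exact ⟨p, q, hlt, heq.symm⟩
  have hPP : ∃ b, (∃ m < b, F m = F b) ∧ ∀ n < b, ¬ ∃ m < n, F m = F n :=
    ⟨Nat.find hP, Nat.find_spec hP, fun n hn => Nat.find_min hP hn⟩
  obtain ⟨b, ⟨a, hab, heq⟩, hmin⟩ := hPP
  -- b ≥ a + 2
  have hb2 : a + 2 ≤ b := by
    rcases Nat.lt_or_ge b (a + 2) with hlt | hge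
    · exfalso
      have hba : b = a + 1 := by omega
      rw [hba] at heq
      rw [hFsucc a] at heq
      exact hg (F a) heq.symm
    · exact hge
  -- injectivity of F on [a, b)
  have hinj : ∀ p q, a ≤ p → p < b → a ≤ q → q < b → F p = F q → p = q := by
    intro p q hp1 hp2 hq1 hq2 hpq
    by_contra hne
    rcases lt_or_gt_of_ne hne with hlt | hlt
    · exact hmin q hq2 ⟨p, hlt, hpq⟩
    · exact hmin p hp2 ⟨q, hlt, hpq.symm⟩
  set m := b - a with hm
  refine ⟨f (F a), (List.range' (a + 1) (m - 1)).map (f ∘ F), ?_, ?_, ?_⟩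
  · simp only [ne_eq, List.map_eq_nil_iff]
    intro hnil
    have := congrArg List.length hnil
    simp at this
    omega
  · have key : List.Chain (fun p q => A (f (F p)) (f (F q))) a
        (List.range' (a + 1) (m - 1) ++ [a]) := by
      apply chain_range'_helper
      · intro n
        rw [hFsucc n]
        exact hA (F n)
      · have h1 : a + (m - 1) + 1 = b := by omega
        have h2 : F (a + (m - 1) + 1) = F a := by rw [h1, ← heq]
        have h3 := hA (F (a + (m - 1)))
        rw [← hFsucc (a + (m - 1))] at h3
        rw [h2] at h3
        exact h3
    have hch : List.Chain A ((f ∘ F) a) ((List.range' (a + 1) (m - 1) ++ [a]).map (f ∘ F)) :=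
      (List.isChain_cons_map (R := A) (f ∘ F) (b := a)
      (l := List.range' (a + 1) (m - 1) ++ [a])).mpr key
    simpa using hch
  · have hcons : (a :: List.range' (a + 1) (m - 1)) = List.range' a m := by
      conv_rhs => rw [show m = (m - 1) + 1 from by omega, List.range'_succ]
    have : ((f (F a) :: (List.range' (a + 1) (m - 1)).map (f ∘ F)).map part)
        = (List.range' a m).map (fun n => part (f (F n))) := by
      rw [← hcons]; simp [Function.comp]
    rw [this]
    simp only [hf]
    apply List.Nodup.map_on
    · intro p hp q hq hpq
      rw [List.mem_range'_1] at hp hq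
      exact hinj p q hp.1 (by omega) hq.1 (by omega) hpq
    · exact List.nodup_range' 1 Nat.one_pos



/-- For every `d ≥ 2` and every `k ≥ 4 d ln d`, every `(k,d)`-layered digraph
contains a rainbow cycle: a directed cycle (given by a start vertex `v` and a
nonempty list `c` of further vertices, with consecutive edges and an edge back
to `v`) containing at most one vertex from each part. In particular,
`R(d) < 4 d ln d`, so `R(d) = O(d log d)`. -/
theorem rainbow_cycle_of_layered_digraph_log_bound
    {V : Type*} [Fintype V] [DecidableEq V] {k d : ℕ}
    (hd : 2 ≤ d)
    (hk : 4 * (d : ℝ) * Real.log d ≤ (k : ℝ))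
    (A : V → V → Prop) (part : V → Fin k)
    (hne : ∀ i : Fin k, ∃ x : V, part x = i)
    (hsize : ∀ i : Fin k, (Finset.univ.filter fun x : V => part x = i).card ≤ d)
    (hin : ∀ x : V, ∀ j : Fin k, j ≠ part x → ∃ u : V, part u = j ∧ A u x)
    (hout : ∀ x : V, ∀ j : Fin k, j ≠ part x → ∃ u : V, part u = j ∧ A x u) :
    ∃ (v : V) (c : List V), c ≠ [] ∧ List.Chain A v (c ++ [v]) ∧
      ((v :: c).map part).Nodup := by
  classical
  by_contra hcon
  -- basic positivity
  have hd0 : 0 < d := by omega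
  have hdR : (0 : ℝ) < d := by positivity
  have hlogd : (0:ℝ) < Real.log d := Real.log_pos (by exact_mod_cast (by omega : 1 < d))
  have hk0 : (0 : ℝ) < k := lt_of_lt_of_le (by positivity) hk
  have hk1 : 0 < k := by exact_mod_cast Nat.pos_of_ne_zero (by rintro rfl; simp at hk0)
  -- the parts
  set Vs : Fin k → Finset V := fun i => Finset.univ.filter (fun x => part x = i) with hVs
  set n : Fin k → ℕ := fun i => (Vs i).card with hn
  have hmemVs : ∀ (x : V) (i : Fin k), x ∈ Vs i ↔ part x = i := by
    intro x i; simp [hVs]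
  have hn1 : ∀ i, 1 ≤ n i := by
    intro i
    obtain ⟨x, hx⟩ := hne i
    exact Finset.card_pos.mpr ⟨x, (hmemVs x i).mpr hx⟩
  have hnd : ∀ i, n i ≤ d := fun i => hsize i
  -- choice of out-neighbours
  have hwex : ∀ (v : V) (j : Fin k), ∃ u, j ≠ part v → part u = j ∧ A v u := by
    intro v j
    by_cases hj : j = part v
    · exact ⟨v, fun h => absurd hj h⟩
    · obtain ⟨u, hu⟩ := hout v j hj; exact ⟨u, fun _ => hu⟩
  choose w hwspec using hwex
  -- the set of choice functions
  set C := Fintype.piFinset Vs with hC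
  -- every f in C has a sink
  have hsink : ∀ f ∈ C, ∃ i : Fin k, ∀ j, j ≠ i → ¬ A (f i) (f j) := by
    intro f hfC
    by_contra hno
    push_neg at hno
    have hfpart : ∀ i, part (f i) = i := by
      intro i
      have := Fintype.mem_piFinset.mp hfC i
      exact (hmemVs _ _).mp this
    exact hcon (exists_rainbow_of_no_sink hk1 A part f hfpart hno)
  -- the covering family
  set T : Fin k → V → Fin k → Finset V :=
    fun i v j => if j = i then {v} else (Vs j).erase (w v j) with hT
  have hcover : C ⊆ Finset.univ.biUnion
      (fun i => (Vs i).biUnion (fun v => Fintype.piFinset (T i v))) := by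
    intro f hfC
    obtain ⟨i, hi⟩ := hsink f hfC
    have hfj : ∀ j, f j ∈ Vs j := Fintype.mem_piFinset.mp hfC
    have hfpart : ∀ j, part (f j) = j := fun j => (hmemVs _ _).mp (hfj j)
    refine Finset.mem_biUnion.mpr ⟨i, Finset.mem_univ i,
      Finset.mem_biUnion.mpr ⟨f i, hfj i, ?_⟩⟩
    refine Fintype.mem_piFinset.mpr (fun j => ?_)
    by_cases hji : j = i
    · subst hji; simp [hT]
    · simp only [hT, if_neg hji]
      refine Finset.mem_erase.mpr ⟨?_, hfj j⟩
      intro hfw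
      have hj' : j ≠ part (f i) := by rw [hfpart i]; exact hji
      have hAfw := (hwspec (f i) j hj').2
      rw [← hfw] at hAfw
      exact hi j hji hAfw
  -- cardinality of each piece
  have hTcard : ∀ (i : Fin k), ∀ v ∈ Vs i, ∀ j,
      (T i v j).card = if j = i then 1 else n j - 1 := by
    intro i v hv j
    by_cases hji : j = i
    · subst hji; simp [hT]
    · simp only [hT, if_neg hji]
      have hj' : j ≠ part v := by rw [(hmemVs v i).mp hv]; exact hji
      have : w v j ∈ Vs j := (hmemVs _ _).mpr (hwspec v j hj').1
      rw [Finset.card_erase_of_mem this]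
  -- counting inequality in ℕ
  have hcount : ∏ j, n j ≤ ∑ i : Fin k, n i * ∏ j ∈ Finset.univ.erase i, (n j - 1) := by
    calc ∏ j, n j = C.card := (Fintype.card_piFinset Vs).symm
      _ ≤ (Finset.univ.biUnion
            (fun i => (Vs i).biUnion (fun v => Fintype.piFinset (T i v)))).card :=
          Finset.card_le_card hcover
      _ ≤ ∑ i : Fin k, ((Vs i).biUnion (fun v => Fintype.piFinset (T i v))).card :=
          Finset.card_biUnion_le
      _ ≤ ∑ i : Fin k, ∑ v ∈ Vs i, (Fintype.piFinset (T i v)).card :=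
          Finset.sum_le_sum (fun i _ => Finset.card_biUnion_le)
      _ = ∑ i : Fin k, n i * ∏ j ∈ Finset.univ.erase i, (n j - 1) := by
          refine Finset.sum_congr rfl (fun i _ => ?_)
          rw [show (n i) * ∏ j ∈ Finset.univ.erase i, (n j - 1)
              = ∑ v ∈ Vs i, ∏ j ∈ Finset.univ.erase i, (n j - 1) from by
            rw [Finset.sum_const, smul_eq_mul]]
          refine Finset.sum_congr rfl (fun v hv => ?_)
          rw [Fintype.card_piFinset]
          calc ∏ j, (T i v j).card
              = ∏ j, (if j = i then 1 else n j - 1) :=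
                Finset.prod_congr rfl (fun j _ => hTcard i v hv j)
            _ = (if i = i then 1 else n i - 1) *
                  ∏ j ∈ Finset.univ.erase i, (if j = i then 1 else n j - 1) :=
                (Finset.mul_prod_erase Finset.univ _ (Finset.mem_univ i)).symm
            _ = ∏ j ∈ Finset.univ.erase i, (n j - 1) := by
                rw [if_pos rfl, one_mul]
                exact Finset.prod_congr rfl (fun j hj =>
                  if_neg (Finset.mem_erase.mp hj).1)
  -- pass to ℝ
  set q : ℝ := (((d : ℝ) - 1) / d) ^ (k - 1) with hq
  have hNpos : (0 : ℝ) < ∏ j, (n j : ℝ) :=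
    Finset.prod_pos (fun j _ => by exact_mod_cast hn1 j)
  have hterm : ∀ i : Fin k,
      ((n i * ∏ j ∈ Finset.univ.erase i, (n j - 1) : ℕ) : ℝ)
        ≤ (∏ j, (n j : ℝ)) * q := by
    intro i
    have e1 : ((n i * ∏ j ∈ Finset.univ.erase i, (n j - 1) : ℕ) : ℝ)
        = (n i : ℝ) * ∏ j ∈ Finset.univ.erase i, ((n j : ℝ) - 1) := by
      rw [Nat.cast_mul, Nat.cast_prod]
      congr 1
      exact Finset.prod_congr rfl (fun j _ => by
        rw [Nat.cast_sub (hn1 j)]; norm_num)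
    have e2 : (∏ j, (n j : ℝ)) = (n i : ℝ) * ∏ j ∈ Finset.univ.erase i, (n j : ℝ) :=
      (Finset.mul_prod_erase Finset.univ _ (Finset.mem_univ i)).symm
    rw [e1, e2, hq, mul_assoc]
    refine mul_le_mul_of_nonneg_left ?_ (by positivity)
    have hcarde : (Finset.univ.erase i).card = k - 1 := by
      rw [Finset.card_erase_of_mem (Finset.mem_univ i), Finset.card_univ,
        Fintype.card_fin]
    calc ∏ j ∈ Finset.univ.erase i, ((n j : ℝ) - 1)
        ≤ ∏ j ∈ Finset.univ.erase i, ((n j : ℝ) * (((d : ℝ) - 1) / d)) := by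
          refine Finset.prod_le_prod (fun j _ => ?_) (fun j _ => ?_)
          · have h1 : (1 : ℝ) ≤ n j := by exact_mod_cast hn1 j
            linarith
          · have h1 : (1 : ℝ) ≤ n j := by exact_mod_cast hn1 j
            have h2 : (n j : ℝ) ≤ d := by exact_mod_cast hnd j
            rw [← mul_div_assoc, le_div_iff₀ hdR]
            nlinarith
      _ = (∏ j ∈ Finset.univ.erase i, (n j : ℝ)) *
            (((d : ℝ) - 1) / d) ^ ((Finset.univ.erase i).card) := by
          rw [Finset.prod_mul_distrib, Finset.prod_const]
      _ = (∏ j ∈ Finset.univ.erase i, (n j : ℝ)) * (((d : ℝ) - 1) / d) ^ (k - 1) := by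
          rw [hcarde]
  have hfinal : (∏ j, (n j : ℝ)) ≤ (k : ℝ) * ((∏ j, (n j : ℝ)) * q) := by
    calc (∏ j, (n j : ℝ))
        = ((∏ j, n j : ℕ) : ℝ) := by push_cast; rfl
      _ ≤ ((∑ i : Fin k, n i * ∏ j ∈ Finset.univ.erase i, (n j - 1) : ℕ) : ℝ) := by
          exact_mod_cast hcount
      _ = ∑ i : Fin k, ((n i * ∏ j ∈ Finset.univ.erase i, (n j - 1) : ℕ) : ℝ) := by
          rw [Nat.cast_sum]
      _ ≤ ∑ i : Fin k, (∏ j, (n j : ℝ)) * q :=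
          Finset.sum_le_sum (fun i _ => hterm i)
      _ = (k : ℝ) * ((∏ j, (n j : ℝ)) * q) := by
          rw [Finset.sum_const, Finset.card_univ, Fintype.card_fin, nsmul_eq_mul]
  have h1q : (1 : ℝ) ≤ (k : ℝ) * q := by
    rw [show (k : ℝ) * ((∏ j, (n j : ℝ)) * q) = (∏ j, (n j : ℝ)) * ((k : ℝ) * q) from by
      ring] at hfinal
    have h' : (∏ j, (n j : ℝ)) * 1 ≤ (∏ j, (n j : ℝ)) * ((k : ℝ) * q) := by
      rw [mul_one]; exact hfinal
    exact (mul_le_mul_iff_right₀ hNpos).mp h'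
  exact absurd h1q (not_le.mpr (analytic_bound hd hk))
end

section
/- Let M be a finite set of goods. Every nice-cancelable valuation v : 2^M → ℝ_{≥0} is MMS-feasible. -/
/-- A valuation `v` is nice-cancelable: for every `S, T ⊆ M` and every
`g ∈ M \ (S ∪ T)`, `v (S ∪ {g}) > v (T ∪ {g})` implies `v S > v T`. -/
def NiceCancelable {α : Type*} [DecidableEq α] (M : Finset α) (v : Finset α → ℝ) : Prop :=
  ∀ S T : Finset α, S ⊆ M → T ⊆ M → ∀ g ∈ M, g ∉ S ∪ T →
    v (insert g S) > v (insert g T) → v S > v T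

/-- A valuation `v` is MMS-feasible: for every subset `S ⊆ M` and every pair of
2-partitions `(A₁, A₂)` and `(B₁, B₂)` of `S`,
`max (v B₁) (v B₂) ≥ min (v A₁) (v A₂)`. -/
def MMSFeasible {α : Type*} [DecidableEq α] (M : Finset α) (v : Finset α → ℝ) : Prop :=
  ∀ S : Finset α, S ⊆ M →
    ∀ A₁ A₂ B₁ B₂ : Finset α,
      Disjoint A₁ A₂ → A₁ ∪ A₂ = S →
      Disjoint B₁ B₂ → B₁ ∪ B₂ = S →
      min (v A₁) (v A₂) ≤ max (v B₁) (v B₂)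

/-- Every nice-cancelable nonnegative valuation is MMS-feasible. -/
theorem mmsFeasible_of_niceCancelable
    {α : Type*} [DecidableEq α] (M : Finset α) (v : Finset α → ℝ)
    (hnonneg : ∀ S : Finset α, S ⊆ M → 0 ≤ v S)
    (hnc : NiceCancelable M v) :
    MMSFeasible M v := by
  -- Key claim: for two 2-partitions of the same set `S ⊆ M`, it is impossible
  -- that `v B₁ < v A₁` and `v B₂ < v A₂` both hold.
  have key : ∀ n (S : Finset α), S.card = n → S ⊆ M →
      ∀ A₁ A₂ B₁ B₂ : Finset α, Disjoint A₁ A₂ → A₁ ∪ A₂ = S →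
        Disjoint B₁ B₂ → B₁ ∪ B₂ = S → v B₁ < v A₁ → v B₂ < v A₂ → False := by
    intro n
    induction n with
    | zero =>
      intro S hcard hS A₁ A₂ B₁ B₂ hA hAu hB hBu h1 h2
      have hSe : S = ∅ := Finset.card_eq_zero.mp hcard
      subst hSe
      have hA1 : A₁ = ∅ := (Finset.union_eq_empty.mp hAu).1
      have hB1 : B₁ = ∅ := (Finset.union_eq_empty.mp hBu).1
      rw [hA1, hB1] at h1
      exact lt_irrefl _ h1
    | succ n ih =>
      intro S hcard hS A₁ A₂ B₁ B₂ hA hAu hB hBu h1 h2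
      have hA1S : A₁ ⊆ S := hAu ▸ Finset.subset_union_left
      have hA2S : A₂ ⊆ S := hAu ▸ Finset.subset_union_right
      have hB1S : B₁ ⊆ S := hBu ▸ Finset.subset_union_left
      have hB2S : B₂ ⊆ S := hBu ▸ Finset.subset_union_right
      by_cases hc1 : (A₁ ∩ B₁).Nonempty
      · obtain ⟨g, hg⟩ := hc1
        rw [Finset.mem_inter] at hg
        obtain ⟨hgA, hgB⟩ := hg
        have hgS : g ∈ S := hA1S hgA
        have hgM : g ∈ M := hS hgS
        have hgA2 : g ∉ A₂ := Finset.disjoint_left.mp hA hgA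
        have hgB2 : g ∉ B₂ := Finset.disjoint_left.mp hB hgB
        have hcancel : v (B₁.erase g) < v (A₁.erase g) := by
          apply hnc _ _ (((Finset.erase_subset _ _).trans hA1S).trans hS)
            (((Finset.erase_subset _ _).trans hB1S).trans hS) g hgM
          · simp [Finset.mem_union]
          · rw [Finset.insert_erase hgA, Finset.insert_erase hgB]
            exact h1
        refine ih (S.erase g) ?_ ((Finset.erase_subset _ _).trans hS)
          (A₁.erase g) A₂ (B₁.erase g) B₂
          (hA.mono_left (Finset.erase_subset _ _)) ?_
          (hB.mono_left (Finset.erase_subset _ _)) ?_ hcancel h2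
        · simp [Finset.card_erase_of_mem hgS, hcard]
        · rw [← hAu, Finset.erase_union_distrib, Finset.erase_eq_of_notMem hgA2]
        · rw [← hBu, Finset.erase_union_distrib, Finset.erase_eq_of_notMem hgB2]
      · by_cases hc2 : (A₂ ∩ B₂).Nonempty
        · obtain ⟨g, hg⟩ := hc2
          rw [Finset.mem_inter] at hg
          obtain ⟨hgA, hgB⟩ := hg
          have hgS : g ∈ S := hA2S hgA
          have hgM : g ∈ M := hS hgS
          have hgA1 : g ∉ A₁ := Finset.disjoint_right.mp hA hgA
          have hgB1 : g ∉ B₁ := Finset.disjoint_right.mp hB hgB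
          have hcancel : v (B₂.erase g) < v (A₂.erase g) := by
            apply hnc _ _ (((Finset.erase_subset _ _).trans hA2S).trans hS)
              (((Finset.erase_subset _ _).trans hB2S).trans hS) g hgM
            · simp [Finset.mem_union]
            · rw [Finset.insert_erase hgA, Finset.insert_erase hgB]
              exact h2
          refine ih (S.erase g) ?_ ((Finset.erase_subset _ _).trans hS)
            A₁ (A₂.erase g) B₁ (B₂.erase g)
            (hA.mono_right (Finset.erase_subset _ _)) ?_
            (hB.mono_right (Finset.erase_subset _ _)) ?_ h1 hcancel
          · simp [Finset.card_erase_of_mem hgS, hcard]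
          · rw [← hAu, Finset.erase_union_distrib, Finset.erase_eq_of_notMem hgA1]
          · rw [← hBu, Finset.erase_union_distrib, Finset.erase_eq_of_notMem hgB1]
        · -- A₁ ∩ B₁ = ∅ and A₂ ∩ B₂ = ∅, hence A₁ = B₂ and A₂ = B₁.
          rw [Finset.not_nonempty_iff_eq_empty, ← Finset.disjoint_iff_inter_eq_empty] at hc1 hc2
          have hA1B2 : A₁ = B₂ := by
            apply Finset.Subset.antisymm
            · intro x hx
              have hxS : x ∈ S := hA1S hx
              rcases Finset.mem_union.mp (hBu ▸ hxS) with h | h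
              · exact absurd h (Finset.disjoint_left.mp hc1 hx)
              · exact h
            · intro x hx
              have hxS : x ∈ S := hB2S hx
              rcases Finset.mem_union.mp (hAu ▸ hxS) with h | h
              · exact h
              · exact absurd hx (Finset.disjoint_left.mp hc2 h)
          have hA2B1 : A₂ = B₁ := by
            apply Finset.Subset.antisymm
            · intro x hx
              have hxS : x ∈ S := hA2S hx
              rcases Finset.mem_union.mp (hBu ▸ hxS) with h | h
              · exact h
              · exact absurd h (Finset.disjoint_left.mp hc2 hx)
            · intro x hx
              have hxS : x ∈ S := hB1S hx
              rcases Finset.mem_union.mp (hAu ▸ hxS) with h | h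
              · exact absurd hx (Finset.disjoint_left.mp hc1 h)
              · exact h
          rw [← hA2B1] at h1
          rw [← hA1B2] at h2
          linarith
  intro S hS A₁ A₂ B₁ B₂ hA hAu hB hBu
  by_contra h
  push_neg at h
  have h1 : v B₁ < v A₁ :=
    lt_of_le_of_lt (le_max_left _ _) (lt_of_lt_of_le h (min_le_left _ _))
  have h2 : v B₂ < v A₂ :=
    lt_of_le_of_lt (le_max_right _ _) (lt_of_lt_of_le h (min_le_right _ _))
  exact key S.card S rfl hS A₁ A₂ B₁ B₂ hA hAu hB hBu h1 h2
end

section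
/- Let M be a finite set of goods, let v_1 : 2^M → ℝ_{≥0} be an MMS-feasible valuation and let v_2 : 2^M → ℝ_{≥0} be any valuation. Then there exists a partition (X_1, X_2) of M with v_1(X_1) ≥ MMS_1(2, M) and v_2(X_2) ≥ MMS_2(2, M), where MMS_i(2, M) denotes the maximum over all partitions (A_1, A_2) of M into two (possibly empty) parts of min(v_i(A_1), v_i(A_2)). -/
lemma part_eq_sdiff {α : Type*} [DecidableEq α] {M A₁ A₂ : Finset α}
    (hd : Disjoint A₁ A₂) (hu : A₁ ∪ A₂ = M) : A₂ = M \ A₁ := by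
  subst hu
  rw [Finset.union_sdiff_cancel_left hd]

/-- If agent 1 has an MMS-feasible valuation and agent 2 has any (nonnegative)
valuation, then there is a 2-partition `(X₁, X₂)` of `M` giving each agent at
least her maximin share: `v i (X i)` is at least `min (v i A₁) (v i A₂)` for
every 2-partition `(A₁, A₂)` of `M`. -/
theorem mms_allocation_two_agents
    {α : Type*} [DecidableEq α] (M : Finset α) (v₁ v₂ : Finset α → ℝ)
    (hnn₁ : ∀ S : Finset α, S ⊆ M → 0 ≤ v₁ S)
    (hnn₂ : ∀ S : Finset α, S ⊆ M → 0 ≤ v₂ S)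
    (hmms : MMSFeasible M v₁) :
    ∃ X₁ X₂ : Finset α, Disjoint X₁ X₂ ∧ X₁ ∪ X₂ = M ∧
      (∀ A₁ A₂ : Finset α, Disjoint A₁ A₂ → A₁ ∪ A₂ = M →
        min (v₁ A₁) (v₁ A₂) ≤ v₁ X₁) ∧
      (∀ A₁ A₂ : Finset α, Disjoint A₁ A₂ → A₁ ∪ A₂ = M →
        min (v₂ A₁) (v₂ A₂) ≤ v₂ X₂) := by
  obtain ⟨T, hT, hTmax⟩ := M.powerset.exists_max_image
    (fun S => min (v₂ S) (v₂ (M \ S))) ⟨∅, Finset.empty_mem_powerset M⟩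
  have hdT : Disjoint T (M \ T) := Finset.disjoint_sdiff
  have huT : T ∪ (M \ T) = M := Finset.union_sdiff_of_subset (Finset.mem_powerset.mp hT)
  have key2 : ∀ A₁ A₂ : Finset α, Disjoint A₁ A₂ → A₁ ∪ A₂ = M →
      min (v₂ A₁) (v₂ A₂) ≤ min (v₂ T) (v₂ (M \ T)) := by
    intro A₁ A₂ hd hu
    have h2 := part_eq_sdiff hd hu
    have h1 : A₁ ∈ M.powerset := Finset.mem_powerset.mpr (by rw [← hu]; exact Finset.subset_union_left)
    have := hTmax A₁ h1
    simpa [h2] using this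
  have key1 : ∀ A₁ A₂ : Finset α, Disjoint A₁ A₂ → A₁ ∪ A₂ = M →
      min (v₁ A₁) (v₁ A₂) ≤ max (v₁ T) (v₁ (M \ T)) := fun A₁ A₂ hd hu =>
    hmms M le_rfl A₁ A₂ T (M \ T) hd hu hdT huT
  by_cases h : v₁ (M \ T) ≤ v₁ T
  · refine ⟨T, M \ T, hdT, huT, ?_, ?_⟩
    · intro A₁ A₂ hd hu
      have := key1 A₁ A₂ hd hu
      rwa [max_eq_left h] at this
    · intro A₁ A₂ hd hu
      exact (key2 A₁ A₂ hd hu).trans (min_le_right _ _)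
  · refine ⟨M \ T, T, hdT.symm, by rw [Finset.union_comm]; exact huT, ?_, ?_⟩
    · intro A₁ A₂ hd hu
      have := key1 A₁ A₂ hd hu
      rwa [max_eq_right (le_of_not_ge h)] at this
    · intro A₁ A₂ hd hu
      exact (key2 A₁ A₂ hd hu).trans (min_le_left _ _)
end

section
/- Let M = {g_1, …, g_m} be a finite set of goods, let v_1, …, v_n : 2^M → ℝ_{≥0} be valuations, let δ = min over agents i and subsets S, T ⊆ M with v_i(S) ≠ v_i(T) of |v_i(S) − v_i(T)|, let ε > 0 satisfy ε·2^{m+1} < δ, and define v'_i(S) = v_i(S) + ε·Σ_{g_j ∈ S} 2^j. Then: (1) the perturbed instance is non-degenerate, i.e., for every agent i and all S ≠ T ⊆ M, v'_i(S) ≠ v'_i(T); and (2) every partition X = (X_1, …, X_n) of M that is an EFX allocation with respect to the valuations v'_1, …, v'_n is also an EFX allocation with respect to v_1, …, v_n. -/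
/-- The perturbed valuation `v'ᵢ(S) = vᵢ(S) + ε · Σ_{gⱼ ∈ S} 2^j`, where goods
are `g₁, …, g_m`, modeled as `Fin m` with good `gⱼ` carrying weight `2^(j.val+1)`. -/
noncomputable def perturbedVal {m : ℕ} (v : Finset (Fin m) → ℝ) (ε : ℝ) :
    Finset (Fin m) → ℝ :=
  fun S => v S + ε * ∑ j ∈ S, (2 : ℝ) ^ ((j : ℕ) + 1)

private lemma weight_nonneg {m : ℕ} (S : Finset (Fin m)) :
    0 ≤ ∑ j ∈ S, (2 : ℝ) ^ ((j : ℕ) + 1) :=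
  Finset.sum_nonneg fun _ _ => by positivity

private lemma weight_lt {m : ℕ} (S : Finset (Fin m)) :
    ∑ j ∈ S, (2 : ℝ) ^ ((j : ℕ) + 1) < 2 ^ (m + 1) := by
  calc ∑ j ∈ S, (2 : ℝ) ^ ((j : ℕ) + 1)
      ≤ ∑ j : Fin m, (2 : ℝ) ^ ((j : ℕ) + 1) :=
        Finset.sum_le_sum_of_subset_of_nonneg (Finset.subset_univ S)
          (fun _ _ _ => by positivity)
    _ = 2 * ∑ j ∈ Finset.range m, (2 : ℝ) ^ j := by
        rw [Finset.mul_sum, Fin.sum_univ_eq_sum_range fun j => (2:ℝ) ^ (j+1)]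
        exact Finset.sum_congr rfl fun j _ => by ring
    _ = 2 * (2 ^ m - 1) := by rw [geom_sum_eq (by norm_num)]; ring_nf
    _ < 2 ^ (m + 1) := by rw [pow_succ]; nlinarith [pow_pos (by norm_num : (0:ℝ) < 2) m]

private lemma weight_inj {m : ℕ} {S T : Finset (Fin m)}
    (h : ∑ j ∈ S, (2 : ℝ) ^ ((j : ℕ) + 1) = ∑ j ∈ T, (2 : ℝ) ^ ((j : ℕ) + 1)) :
    S = T := by
  have hN : ∑ j ∈ S, (2 : ℕ) ^ ((j : ℕ) + 1) = ∑ j ∈ T, (2 : ℕ) ^ ((j : ℕ) + 1) := by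
    have hc : ((∑ j ∈ S, (2:ℕ) ^ ((j:ℕ)+1) : ℕ) : ℝ)
        = ((∑ j ∈ T, (2:ℕ) ^ ((j:ℕ)+1) : ℕ) : ℝ) := by push_cast; exact h
    exact_mod_cast hc
  set f : Fin m ↪ ℕ := ⟨fun j => (j : ℕ) + 1, fun a b hab => by
    apply Fin.val_injective; simpa using hab⟩ with hf
  have h1 : ∑ i ∈ S.map f, 2 ^ i = ∑ i ∈ T.map f, 2 ^ i := by
    rw [Finset.sum_map, Finset.sum_map]; exact hN
  have h2 := Finset.geomSum_injective (le_refl 2) h1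
  exact Finset.map_injective f h2

/-- If `δ` bounds from below every nonzero gap `|vᵢ(S) − vᵢ(T)|` and
`ε · 2^(m+1) < δ`, then (1) the perturbed instance is non-degenerate, and
(2) every EFX allocation with respect to the perturbed valuations is an EFX
allocation with respect to the original valuations. -/
theorem perturbed_nondegenerate_and_efx_transfer
    {m n : ℕ} (v : Fin n → Finset (Fin m) → ℝ)
    (hnn : ∀ (i : Fin n) (S : Finset (Fin m)), 0 ≤ v i S)
    (δ ε : ℝ)
    (hδ : ∀ (i : Fin n) (S T : Finset (Fin m)),
      v i S ≠ v i T → δ ≤ |v i S - v i T|)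
    (hε : 0 < ε) (hεδ : ε * 2 ^ (m + 1) < δ) :
    (∀ (i : Fin n) (S T : Finset (Fin m)), S ≠ T →
      perturbedVal (v i) ε S ≠ perturbedVal (v i) ε T) ∧
    (∀ X : Fin n → Finset (Fin m),
      (∀ i j : Fin n, i ≠ j → Disjoint (X i) (X j)) →
      (∀ g : Fin m, ∃ i : Fin n, g ∈ X i) →
      (∀ i j : Fin n, ∀ g ∈ X j,
        perturbedVal (v i) ε (X j \ {g}) ≤ perturbedVal (v i) ε (X i)) →
      (∀ i j : Fin n, ∀ g ∈ X j, v i (X j \ {g}) ≤ v i (X i))) := by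
  have key : ∀ (i : Fin n) (S T : Finset (Fin m)),
      v i S ≠ v i T → ε * 2 ^ (m+1) < |v i S - v i T| :=
    fun i S T h => lt_of_lt_of_le hεδ (hδ i S T h)
  constructor
  · intro i S T hST h
    unfold perturbedVal at h
    by_cases hv : v i S = v i T
    · have : ∑ j ∈ S, (2 : ℝ) ^ ((j : ℕ) + 1) = ∑ j ∈ T, (2 : ℝ) ^ ((j : ℕ) + 1) := by
        have := h; rw [hv] at this
        have := add_left_cancel this
        exact mul_left_cancel₀ (ne_of_gt hε) this
      exact hST (weight_inj this)
    · have hkey := key i S T hv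
      have hS1 := weight_nonneg S
      have hS2 := weight_lt S
      have hT1 := weight_nonneg T
      have hT2 := weight_lt T
      have habs : |v i S - v i T|
          = ε * |∑ j ∈ T, (2 : ℝ) ^ ((j : ℕ) + 1) - ∑ j ∈ S, (2 : ℝ) ^ ((j : ℕ) + 1)| := by
        rw [← abs_of_pos hε, ← abs_mul]
        congr 1; linarith
      rw [habs] at hkey
      have : |∑ j ∈ T, (2 : ℝ) ^ ((j : ℕ) + 1) - ∑ j ∈ S, (2 : ℝ) ^ ((j : ℕ) + 1)|
          < 2 ^ (m+1) := abs_sub_lt_of_nonneg_of_lt hT1 hT2 hS1 hS2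
      nlinarith
  · intro X _ _ hEFX i j g hg
    have h := hEFX i j g hg
    unfold perturbedVal at h
    by_contra hlt
    push_neg at hlt
    have hne : v i (X j \ {g}) ≠ v i (X i) := ne_of_gt hlt
    have hkey := key i (X j \ {g}) (X i) hne
    rw [abs_of_pos (by linarith)] at hkey
    have h1 := weight_nonneg (X j \ {g})
    have h2 := weight_lt (X i)
    nlinarith
end

section
/- Let M be a finite set of goods, let v_2, v_3 : 2^M → ℝ_{≥0} be monotone valuations each of which is injective on subsets of M (non-degeneracy), and let (X_1, X_2, X_3) be a partition of M with X_3 nonempty. Suppose that for each i ∈ {2,3}, neither X_1 nor X_2 is EFX-feasible for agent i with respect to (X_1, X_2, X_3), and let g_i ∈ X_3 satisfy v_i(X_3 \ {g_i}) ≥ v_i(X_3 \ {h}) for all h ∈ X_3. Then for each i ∈ {2,3}, v_i(X_3 \ {g_i}) > max(v_i(X_1), v_i(X_2)). -/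
/-- Bundle `X k` is EFX-feasible for an agent with valuation `v` with respect to
the partition `X = (X 0, X 1, X 2)`. -/
def EFXFeasibleBundle {α : Type*} [DecidableEq α]
    (v : Finset α → ℝ) (X : Fin 3 → Finset α) (k : Fin 3) : Prop :=
  ∀ j : Fin 3, ∀ g ∈ X j, v (X j \ {g}) ≤ v (X k)

/-- Observation: if for each of the two agents (with monotone, nonnegative,
non-degenerate valuations `v 0`, `v 1`) neither `X₁` nor `X₂` is EFX-feasible,
and `g i ∈ X₃` maximizes `v i (X₃ \ {·})`, then
`v i (X₃ \ {g i}) > max (v i X₁) (v i X₂)` for each agent `i`. -/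
theorem best_subbundle_beats_X1_X2
    {α : Type*} [DecidableEq α] (M : Finset α) (v : Fin 2 → Finset α → ℝ)
    (hnn : ∀ (i : Fin 2) (S : Finset α), S ⊆ M → 0 ≤ v i S)
    (hmono : ∀ (i : Fin 2) (S T : Finset α), S ⊆ T → T ⊆ M → v i S ≤ v i T)
    (hinj : ∀ (i : Fin 2) (S T : Finset α), S ⊆ M → T ⊆ M → v i S = v i T → S = T)
    (X : Fin 3 → Finset α)
    (hsub : ∀ j, X j ⊆ M)
    (hdisj : ∀ j j', j ≠ j' → Disjoint (X j) (X j'))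
    (hunion : X 0 ∪ X 1 ∪ X 2 = M)
    (hX3ne : (X 2).Nonempty)
    (g : Fin 2 → α)
    (hg : ∀ i, g i ∈ X 2)
    (hgmax : ∀ i : Fin 2, ∀ h ∈ X 2, v i (X 2 \ {h}) ≤ v i (X 2 \ {g i}))
    (hnotfeas : ∀ i : Fin 2,
      ¬ EFXFeasibleBundle (v i) X 0 ∧ ¬ EFXFeasibleBundle (v i) X 1) :
    ∀ i : Fin 2, max (v i (X 0)) (v i (X 1)) < v i (X 2 \ {g i}) := by
  intro i
  obtain ⟨h0, h1⟩ := hnotfeas i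
  simp only [EFXFeasibleBundle, not_forall, not_le] at h0 h1
  have mono0 : ∀ h : α, v i (X 0 \ {h}) ≤ v i (X 0) := fun h =>
    hmono i _ _ Finset.sdiff_subset (hsub 0)
  have mono1 : ∀ h : α, v i (X 1 \ {h}) ≤ v i (X 1) := fun h =>
    hmono i _ _ Finset.sdiff_subset (hsub 1)
  have k0 : v i (X 0) < v i (X 1) ∨ v i (X 0) < v i (X 2 \ {g i}) := by
    obtain ⟨j, h, hh, hlt⟩ := h0
    fin_cases j
    · exact absurd hlt (not_lt.mpr (mono0 h))
    · exact Or.inl (lt_of_lt_of_le hlt (mono1 h))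
    · exact Or.inr (lt_of_lt_of_le hlt (hgmax i h hh))
  have k1 : v i (X 1) < v i (X 0) ∨ v i (X 1) < v i (X 2 \ {g i}) := by
    obtain ⟨j, h, hh, hlt⟩ := h1
    fin_cases j
    · exact Or.inl (lt_of_lt_of_le hlt (mono0 h))
    · exact absurd hlt (not_lt.mpr (mono1 h))
    · exact Or.inr (lt_of_lt_of_le hlt (hgmax i h hh))
  rcases k0 with k0 | k0 <;> rcases k1 with k1 | k1
  · exact absurd k0 (not_lt.mpr k1.le)
  · exact max_lt (k0.trans k1) k1
  · exact max_lt k0 (k1.trans k0)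
  · exact max_lt k0 k1
end

section
/- Let M be a finite set of goods and let v_1 : 2^M → ℝ_{≥0} be a monotone valuation that is injective on subsets of M. Let X_1, X_2 ⊆ M be disjoint and let g_2 ∈ M \ (X_1 ∪ X_2). Suppose v_1(X_1) > v_1(X_2 \ {g}) for all g ∈ X_2, and v_1(X_2) > v_1(X_1). Let X'_1 ⊆ X_1 ∪ {g_2} be inclusion-minimal among subsets of X_1 ∪ {g_2} whose v_1-value exceeds v_1(X_1), i.e., v_1(X'_1) > v_1(X_1) and v_1(T) < v_1(X_1) for every proper subset T ⊊ X'_1, and let X'_2 = X_2. Then v_1(X'_1) > v_1(X'_2 \ {g}) for all g ∈ X'_2, and v_1(X'_2) > v_1(X'_1 \ {h}) for all h ∈ X'_1. -/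
/-- Observation: with a monotone, nonnegative, non-degenerate valuation `v`,
if `v X₁ > v (X₂ \ {g})` for all `g ∈ X₂`, `v X₂ > v X₁`, and `X₁'` is an
inclusion-minimal subset of `X₁ ∪ {g₂}` with `v X₁' > v X₁`, then
`v X₁' > v (X₂ \ {g})` for all `g ∈ X₂` and `v X₂ > v (X₁' \ {h})` for all
`h ∈ X₁'`. -/
theorem minimal_augmented_bundle_mutual_efx
    {α : Type*} [DecidableEq α] (M : Finset α) (v : Finset α → ℝ)
    (hnn : ∀ S : Finset α, S ⊆ M → 0 ≤ v S)
    (hmono : ∀ S T : Finset α, S ⊆ T → T ⊆ M → v S ≤ v T)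
    (hinj : ∀ S T : Finset α, S ⊆ M → T ⊆ M → v S = v T → S = T)
    (X₁ X₂ : Finset α) (hX₁ : X₁ ⊆ M) (hX₂ : X₂ ⊆ M)
    (hdisj : Disjoint X₁ X₂)
    (g₂ : α) (hg₂M : g₂ ∈ M) (hg₂ : g₂ ∉ X₁ ∪ X₂)
    (h1 : ∀ g ∈ X₂, v (X₂ \ {g}) < v X₁)
    (h2 : v X₁ < v X₂)
    (X₁' : Finset α) (hsub : X₁' ⊆ insert g₂ X₁)
    (hval : v X₁ < v X₁')
    (hmin : ∀ T : Finset α, T ⊂ X₁' → v T < v X₁) :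
    (∀ g ∈ X₂, v (X₂ \ {g}) < v X₁') ∧
    (∀ h ∈ X₁', v (X₁' \ {h}) < v X₂) := by
  constructor
  · intro g hg
    exact lt_trans (h1 g hg) hval
  · intro h hh
    have : X₁' \ {h} ⊂ X₁' := Finset.sdiff_ssubset (by simpa using hh) (by simp)
    exact lt_trans (hmin _ this) h2
end

section
/- Let M be a finite set of goods and let v_2, v_3 : 2^M → ℝ_{≥0} be monotone valuations with v_3 MMS-feasible and with each of v_2, v_3 injective on subsets of M. Let (X_1, X_2, X_3) be a partition of M, let g_2, g_3 ∈ X_3, and suppose: v_2(X_1 ∪ {g_2}) > v_2(X_3 \ {g_2}) > v_2(X_2); v_3(X_1 ∪ {g_3}) > v_3(X_2) and v_3(X_3 \ {g_3}) > v_3(X_2). Let (Y_2, Y_3) be a partition of X_1 ∪ X_3 such that: v_2(Y_2) > v_2(Y_3 \ {h}) for all h ∈ Y_3; min(v_2(Y_2), v_2(Y_3)) ≥ min(v_2(X_1 ∪ {g_2}), v_2(X_3 \ {g_2})); and v_3(Y_3) ≥ v_3(Y_2). Then in the partition (X_2, Y_2, Y_3) of M, the bundle Y_2 is EFX-feasible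 for agent 2 and the bundle Y_3 is EFX-feasible for agent 3; that is, v_2(Y_2) ≥ v_2(B \ {g}) and v_3(Y_3) ≥ v_3(B \ {g}) for every bundle B ∈ {X_2, Y_2, Y_3} and every g ∈ B. -/
/-- Observation: under the stated hypotheses, in the partition `(X₂, Y₂, Y₃)`
of `M`, bundle `Y₂` is EFX-feasible for agent 2 and bundle `Y₃` is EFX-feasible
for agent 3. -/
theorem Y2_Y3_efx_feasible
    {α : Type*} [DecidableEq α] (M : Finset α) (v₂ v₃ : Finset α → ℝ)
    (hnn₂ : ∀ S : Finset α, S ⊆ M → 0 ≤ v₂ S)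
    (hnn₃ : ∀ S : Finset α, S ⊆ M → 0 ≤ v₃ S)
    (hmono₂ : ∀ S T : Finset α, S ⊆ T → T ⊆ M → v₂ S ≤ v₂ T)
    (hmono₃ : ∀ S T : Finset α, S ⊆ T → T ⊆ M → v₃ S ≤ v₃ T)
    (hmms₃ : MMSFeasible M v₃)
    (hinj₂ : ∀ S T : Finset α, S ⊆ M → T ⊆ M → v₂ S = v₂ T → S = T)
    (hinj₃ : ∀ S T : Finset α, S ⊆ M → T ⊆ M → v₃ S = v₃ T → S = T)
    (X₁ X₂ X₃ : Finset α)
    (hd12 : Disjoint X₁ X₂) (hd13 : Disjoint X₁ X₃) (hd23 : Disjoint X₂ X₃)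
    (hXu : X₁ ∪ X₂ ∪ X₃ = M)
    (g₂ : α) (hg₂ : g₂ ∈ X₃) (g₃ : α) (hg₃ : g₃ ∈ X₃)
    (h2a : v₂ (X₃ \ {g₂}) < v₂ (insert g₂ X₁))
    (h2b : v₂ X₂ < v₂ (X₃ \ {g₂}))
    (h3a : v₃ X₂ < v₃ (insert g₃ X₁))
    (h3b : v₃ X₂ < v₃ (X₃ \ {g₃}))
    (Y₂ Y₃ : Finset α) (hYd : Disjoint Y₂ Y₃) (hYu : Y₂ ∪ Y₃ = X₁ ∪ X₃)
    (hPR : ∀ h ∈ Y₃, v₂ (Y₃ \ {h}) < v₂ Y₂)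
    (hPRmin : min (v₂ (insert g₂ X₁)) (v₂ (X₃ \ {g₂})) ≤ min (v₂ Y₂) (v₂ Y₃))
    (hpick : v₃ Y₂ ≤ v₃ Y₃) :
    ∀ B : Finset α, (B = X₂ ∨ B = Y₂ ∨ B = Y₃) →
      ∀ g ∈ B, v₂ (B \ {g}) ≤ v₂ Y₂ ∧ v₃ (B \ {g}) ≤ v₃ Y₃ := by
  have hsub13 : X₁ ∪ X₃ ⊆ M := by
    intro x hx; rw [← hXu]; simp only [Finset.mem_union] at hx ⊢; tauto
  have hX₂M : X₂ ⊆ M := by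
    intro x hx; rw [← hXu]; simp only [Finset.mem_union]; tauto
  have hY₂M : Y₂ ⊆ M := (hYu ▸ Finset.subset_union_left).trans hsub13
  have hY₃M : Y₃ ⊆ M := (hYu ▸ Finset.subset_union_right).trans hsub13
  -- key fact for agent 2
  have key2 : v₂ (X₃ \ {g₂}) ≤ v₂ Y₂ := by
    have h := hPRmin
    rw [min_eq_right h2a.le] at h
    exact h.trans (min_le_left _ _)
  have key2' : v₂ X₂ ≤ v₂ Y₂ := (h2b.le).trans key2
  -- key fact for agent 3
  have key3 : v₃ X₂ ≤ v₃ Y₃ := by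
    have hdisj : Disjoint (insert g₃ X₁) (X₃ \ {g₃}) := by
      rw [Finset.disjoint_insert_left]
      constructor
      · simp
      · exact hd13.mono_right (Finset.sdiff_subset)
    have hun : insert g₃ X₁ ∪ (X₃ \ {g₃}) = X₁ ∪ X₃ := by
      ext x
      simp only [Finset.mem_union, Finset.mem_insert, Finset.mem_sdiff,
        Finset.mem_singleton]
      constructor
      · rintro ((rfl | h) | ⟨h, _⟩) <;> tauto
      · rintro (h | h)
        · tauto
        · by_cases hx : x = g₃ <;> tauto
    have := hmms₃ (X₁ ∪ X₃) hsub13 (insert g₃ X₁) (X₃ \ {g₃}) Y₂ Y₃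
      hdisj hun hYd hYu
    rw [max_eq_right hpick] at this
    exact le_trans (le_min h3a.le h3b.le) this
  intro B hB g hg
  rcases hB with rfl | rfl | rfl
  · constructor
    · exact (hmono₂ _ _ Finset.sdiff_subset hX₂M).trans key2'
    · exact (hmono₃ _ _ Finset.sdiff_subset hX₂M).trans key3
  · constructor
    · exact hmono₂ _ _ Finset.sdiff_subset hY₂M
    · exact ((hmono₃ _ _ Finset.sdiff_subset hY₂M).trans hpick)
  · constructor
    · exact (hPR g hg).le
    · exact hmono₃ _ _ Finset.sdiff_subset hY₃M
end
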